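/- Let n₁, n₂, m′ be positive integers, α > 0, ε > 0, and let X ∈ ℝ^{n₁×n₂} be a fixed matrix with ‖X‖_max ≤ α. Let (i₁,j₁), …, (i_{m′}, j_{m′}) be i.i.d. indices uniform on {1,…,n₁}×{1,…,n₂} and τ₁, …, τ_{m′} i.i.d. uniform on [−α, α], all mutually independent. Set T_ave(X) = (1/m′) · Σ_{k=1}^{m′} |X_{i_k,j_k} − α·sgn(X_{i_k,j_k} − τ_k)|. Then Pr( | T_ave(X) − α + ‖X‖_F² / (α n₁ n₂) | ≥ ε ) ≤ 2·exp(−ε² m′ / (2α²)). -/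

import Mathlib

open MeasureTheory ProbabilityTheory

/-- The sign function: `+1` if `t ≥ 0` and `-1` if `t < 0`. -/
noncomputable def sgn (t : ℝ) : ℝ := if 0 ≤ t then 1 else -1

/-- Frobenius norm of a real matrix. -/
noncomputable def frobR {n₁ n₂ : ℕ} (A : Matrix (Fin n₁) (Fin n₂) ℝ) : ℝ :=
  Real.sqrt (∑ i, ∑ j, (A i j) ^ 2)

section Aux
open Real


lemma hoeff_q_pos (p : ℝ) (hp0 : 0 ≤ p) (hp1 : p ≤ 1) (u : ℝ) :
    0 < 1 - p + p * Real.exp u := by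
  rcases eq_or_lt_of_le hp1 with h | h
  · subst h; simpa using Real.exp_pos u
  · have : 0 ≤ p * Real.exp u := mul_nonneg hp0 (Real.exp_pos u).le
    linarith

lemma hoeffding_aux (p : ℝ) (hp0 : 0 ≤ p) (hp1 : p ≤ 1) (u : ℝ) :
    (1 - p) * Real.exp (-p * u) + p * Real.exp ((1 - p) * u) ≤ Real.exp (u ^ 2 / 8) := by
  set q : ℝ → ℝ := fun u => 1 - p + p * Real.exp u with hq_def
  have hqpos : ∀ u, 0 < q u := hoeff_q_pos p hp0 hp1
  set f : ℝ → ℝ := fun u => -(p * u) + Real.log (q u) with hf_def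
  set f' : ℝ → ℝ := fun u => -p + p * Real.exp u / q u with hf'_def
  set f'' : ℝ → ℝ := fun u => p * (1 - p) * Real.exp u / (q u) ^ 2 with hf''_def
  have hq : ∀ u, HasDerivAt q (p * Real.exp u) u := fun u => by
    simpa [hq_def] using ((Real.hasDerivAt_exp u).const_mul p).const_add (1 - p)
  have hf : ∀ u, HasDerivAt f (f' u) u := fun u => by
    have h1 : HasDerivAt (fun u => Real.log (q u)) (p * Real.exp u / q u) u :=
      (hq u).log (hqpos u).ne'
    exact (((hasDerivAt_id u).const_mul p).neg.add h1).congr_deriv (by simp [hf'_def])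
  have hf' : ∀ u, HasDerivAt f' (f'' u) u := fun u => by
    have h1 : HasDerivAt (fun u => p * Real.exp u) (p * Real.exp u) u :=
      (Real.hasDerivAt_exp u).const_mul p
    have h2 : HasDerivAt (fun u => p * Real.exp u / q u)
        ((p * Real.exp u * q u - p * Real.exp u * (p * Real.exp u)) / (q u) ^ 2) u :=
      h1.div (hq u) (hqpos u).ne'
    have heq : (p * Real.exp u * q u - p * Real.exp u * (p * Real.exp u)) / (q u) ^ 2
        = f'' u := by
      rw [hf''_def]; congr 1; simp only [hq_def]; ring
    rw [heq] at h2
    simpa [hf'_def] using h2.const_add (-p)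
  have hf''le : ∀ u, f'' u ≤ 1 / 4 := by
    intro u
    have h4 : 4 * ((1 - p) * (p * Real.exp u)) ≤ ((1 - p) + p * Real.exp u) ^ 2 := by
      nlinarith [sq_nonneg ((1 - p) - p * Real.exp u)]
    rw [hf''_def, div_le_iff₀ (pow_pos (hqpos u) 2)]
    simp only [hq_def]
    nlinarith
  set G : ℝ → ℝ := fun u => u / 4 - f' u with hG_def
  have hG : ∀ u, HasDerivAt G (1 / 4 - f'' u) u := fun u => by
    exact (((hasDerivAt_id u).div_const 4).sub (hf' u)).congr_deriv (by simp)
  have hGmono : Monotone G := by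
    refine monotone_of_deriv_nonneg (fun u => (hG u).differentiableAt) ?_
    intro u
    rw [(hG u).deriv]
    linarith [hf''le u]
  have hf'0 : f' 0 = 0 := by
    simp [hf'_def, hq_def]
  have hG0 : G 0 = 0 := by simp [hG_def, hf'0]
  set F : ℝ → ℝ := fun u => u ^ 2 / 8 - f u with hF_def
  have hF : ∀ u, HasDerivAt F (G u) u := fun u => by
    have h1 : HasDerivAt (fun u : ℝ => u ^ 2 / 8) (u / 4) u := by
      have := ((hasDerivAt_pow 2 u).div_const 8)
      exact this.congr_deriv (by norm_num; ring)
    have := h1.sub (hf u)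
    exact this
  have hF0 : F 0 = 0 := by simp [hF_def, hf_def, hq_def]
  have hFnonneg : ∀ u, 0 ≤ F u := by
    intro u
    rcases le_or_gt 0 u with h | h
    · have hmono : MonotoneOn F (Set.Ici (0 : ℝ)) := by
        refine monotoneOn_of_deriv_nonneg (convex_Ici 0)
          (Continuous.continuousOn (by
            have : Differentiable ℝ F := fun u => (hF u).differentiableAt
            exact this.continuous))
          (fun x _ => (hF x).differentiableAt.differentiableWithinAt) ?_
        intro x hx
        rw [(hF x).deriv]
        have : (0:ℝ) ≤ x := le_of_lt (by simpa using hx)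
        calc (0:ℝ) = G 0 := hG0.symm
        _ ≤ G x := hGmono this
      have := hmono (Set.self_mem_Ici) (Set.mem_Ici.mpr h) h
      linarith [hF0]
    · have hmono : AntitoneOn F (Set.Iic (0 : ℝ)) := by
        refine antitoneOn_of_deriv_nonpos (convex_Iic 0)
          (Continuous.continuousOn (by
            have : Differentiable ℝ F := fun u => (hF u).differentiableAt
            exact this.continuous))
          (fun x _ => (hF x).differentiableAt.differentiableWithinAt) ?_
        intro x hx
        rw [(hF x).deriv]
        have : x ≤ (0:ℝ) := le_of_lt (by simpa using hx)
        calc G x ≤ G 0 := hGmono this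
        _ = 0 := hG0
      have := hmono (Set.mem_Iic.mpr h.le) (Set.self_mem_Iic) h.le
      linarith [hF0]
  have key : f u ≤ u ^ 2 / 8 := by have := hFnonneg u; simp only [hF_def] at this; linarith
  have hLHS : (1 - p) * Real.exp (-p * u) + p * Real.exp ((1 - p) * u) = Real.exp (f u) := by
    rw [hf_def]
    simp only
    rw [Real.exp_add, Real.exp_log (hqpos u)]
    simp only [hq_def]
    have h1 : Real.exp ((1 - p) * u) = Real.exp u * Real.exp (-(p * u)) := by
      rw [← Real.exp_add]; ring_nf
    have h2 : Real.exp (-p * u) = Real.exp (-(p * u)) := by ring_nf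
    rw [h1, h2]; ring
  calc (1 - p) * Real.exp (-p * u) + p * Real.exp ((1 - p) * u) = Real.exp (f u) := hLHS
  _ ≤ Real.exp (u ^ 2 / 8) := Real.exp_le_exp.mpr key

lemma bounded_integrable {Ω : Type*} [MeasurableSpace Ω] {μ : Measure Ω} [IsFiniteMeasure μ]
    {Y : Ω → ℝ} (hmeas : Measurable Y) (C : ℝ) (hC : ∀ ω, |Y ω| ≤ C) :
    Integrable Y μ :=
  (integrable_const C).mono' hmeas.aestronglyMeasurable (ae_of_all _ (fun ω => by
    simpa using hC ω))

lemma hoeffding_lemma {Ω : Type*} [MeasurableSpace Ω] {μ : Measure Ω} [IsProbabilityMeasure μ]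
    {Y : Ω → ℝ} (hmeas : Measurable Y) {a b : ℝ}
    (hab : ∀ ω, Y ω ∈ Set.Icc a b) (hmean : ∫ ω, Y ω ∂μ = 0) (t : ℝ) :
    mgf Y μ t ≤ Real.exp (t ^ 2 * (b - a) ^ 2 / 8) := by
  have hYint : Integrable Y μ := by
    refine bounded_integrable hmeas (max |a| |b|) (fun ω => ?_)
    rcases hab ω with ⟨h1, h2⟩
    rw [abs_le]
    constructor
    · exact le_trans (neg_le_neg (le_max_left |a| |b|)) (le_trans (neg_abs_le a) h1)
    · exact le_trans h2 (le_trans (le_abs_self b) (le_max_right |a| |b|))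
  obtain ⟨ω₀⟩ : Nonempty Ω := by
    by_contra h
    rw [not_nonempty_iff] at h
    have : μ Set.univ = 0 := by simp [Set.univ_eq_empty_iff.mpr h]
    simp [measure_univ] at this
  have haleb : a ≤ b := le_trans (hab ω₀).1 (hab ω₀).2
  have ha0 : a ≤ 0 := by
    have : ∫ (_ : Ω), a ∂μ ≤ ∫ ω, Y ω ∂μ :=
      integral_mono (integrable_const a) hYint (fun ω => (hab ω).1)
    simpa [hmean] using this
  have hb0 : 0 ≤ b := by
    have : ∫ ω, Y ω ∂μ ≤ ∫ (_ : Ω), b ∂μ :=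
      integral_mono hYint (integrable_const b) (fun ω => (hab ω).2)
    simpa [hmean] using this
  rcases eq_or_lt_of_le haleb with heq | hlt
  · -- a = b, so a = b = 0 and Y = 0
    have ha : a = 0 := le_antisymm ha0 (heq ▸ hb0)
    have hb : b = 0 := heq ▸ ha
    have hY0 : ∀ ω, Y ω = 0 := fun ω =>
      le_antisymm (hb ▸ (hab ω).2) (ha ▸ (hab ω).1)
    have : mgf Y μ t = 1 := by
      unfold mgf
      simp [hY0]
    rw [this]
    rw [Real.one_le_exp_iff.symm] at *
    · exact Real.exp_le_exp.mpr (by positivity) |>.trans_eq' (by simp)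
  · set p : ℝ := -a / (b - a) with hp_def
    set u : ℝ := t * (b - a) with hu_def
    have hba : 0 < b - a := by linarith
    have hp0 : 0 ≤ p := div_nonneg (by linarith) hba.le
    have hp1 : p ≤ 1 := by
      rw [div_le_one hba]; linarith
    -- pointwise convexity bound
    have hptwise : ∀ ω, Real.exp (t * Y ω) ≤
        (b - Y ω) / (b - a) * Real.exp (t * a) + (Y ω - a) / (b - a) * Real.exp (t * b) := by
      intro ω
      have h1 : (0:ℝ) ≤ (b - Y ω) / (b - a) := div_nonneg (by linarith [(hab ω).2]) hba.le
      have h2 : (0:ℝ) ≤ (Y ω - a) / (b - a) := div_nonneg (by linarith [(hab ω).1]) hba.le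
      have h3 : (b - Y ω) / (b - a) + (Y ω - a) / (b - a) = 1 := by
        field_simp
        ring
      have := convexOn_exp.2 (Set.mem_univ (t * a)) (Set.mem_univ (t * b)) h1 h2 h3
      simp only [smul_eq_mul] at this
      have harg : (b - Y ω) / (b - a) * (t * a) + (Y ω - a) / (b - a) * (t * b) = t * Y ω := by
        field_simp
        ring
      rwa [harg] at this
    -- integrate
    have hIexp : Integrable (fun ω => Real.exp (t * Y ω)) μ := by
      refine bounded_integrable (by fun_prop) (Real.exp (|t| * max |a| |b|)) (fun ω => ?_)
      rw [abs_of_nonneg (Real.exp_pos _).le]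
      apply Real.exp_le_exp.mpr
      calc t * Y ω ≤ |t * Y ω| := le_abs_self _
      _ = |t| * |Y ω| := abs_mul t (Y ω)
      _ ≤ |t| * max |a| |b| := by
          apply mul_le_mul_of_nonneg_left _ (abs_nonneg t)
          rcases hab ω with ⟨h1, h2⟩
          rw [abs_le]
          exact ⟨le_trans (neg_le_neg (le_max_left |a| |b|)) (le_trans (neg_abs_le a) h1),
            le_trans h2 (le_trans (le_abs_self b) (le_max_right |a| |b|))⟩
    have hIrhs : Integrable (fun ω =>
        (b - Y ω) / (b - a) * Real.exp (t * a) + (Y ω - a) / (b - a) * Real.exp (t * b)) μ := by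
      apply Integrable.add
      · exact ((((integrable_const b).sub hYint).div_const (b - a)).mul_const _)
      · exact (((hYint.sub (integrable_const a)).div_const (b - a)).mul_const _)
    have hint : mgf Y μ t ≤ (b * Real.exp (t * a) - a * Real.exp (t * b)) / (b - a) := by
      unfold mgf
      calc ∫ ω, Real.exp (t * Y ω) ∂μ
          ≤ ∫ ω, ((b - Y ω) / (b - a) * Real.exp (t * a)
              + (Y ω - a) / (b - a) * Real.exp (t * b)) ∂μ :=
            integral_mono hIexp hIrhs hptwise
      _ = ∫ ω, ((b * Real.exp (t * a) - a * Real.exp (t * b)) / (b - a)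
              + Y ω * ((Real.exp (t * b) - Real.exp (t * a)) / (b - a))) ∂μ := by
            apply integral_congr_ae
            filter_upwards with ω
            field_simp
            ring
      _ = (b * Real.exp (t * a) - a * Real.exp (t * b)) / (b - a) := by
            rw [integral_add (integrable_const _) (hYint.mul_const _),
              integral_mul_const, hmean, integral_const]
            simp [measure_univ]
    have hkey : (b * Real.exp (t * a) - a * Real.exp (t * b)) / (b - a)
        = (1 - p) * Real.exp (-p * u) + p * Real.exp ((1 - p) * u) := by
      have e1 : -p * u = t * a := by
        rw [hp_def, hu_def]
        field_simp
      have e2 : (1 - p) * u = t * b := by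
        rw [hp_def, hu_def]
        field_simp
        ring
      rw [e1, e2, hp_def]
      field_simp
      ring
    have := hoeffding_aux p hp0 hp1 u
    have hu2 : u ^ 2 / 8 = t ^ 2 * (b - a) ^ 2 / 8 := by rw [hu_def]; ring
    calc mgf Y μ t ≤ (b * Real.exp (t * a) - a * Real.exp (t * b)) / (b - a) := hint
    _ = (1 - p) * Real.exp (-p * u) + p * Real.exp ((1 - p) * u) := hkey
    _ ≤ Real.exp (u ^ 2 / 8) := hoeffding_aux p hp0 hp1 u
    _ = Real.exp (t ^ 2 * (b - a) ^ 2 / 8) := by rw [hu2]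

universe uu
lemma iIndepFun_pair {Ω ι : Type*} [MeasurableSpace Ω] {μ : Measure Ω} [IsProbabilityMeasure μ]
    {β γ : Type uu} [mβ : MeasurableSpace β] [mγ : MeasurableSpace γ]
    {X : ι → Ω → β} {Y : ι → Ω → γ}
    (hX : ∀ i, Measurable (X i)) (hY : ∀ i, Measurable (Y i))
    (h : iIndepFun (β := fun s : ι ⊕ ι => Sum.elim (fun _ => β) (fun _ => γ) s)
      (m := fun s => Sum.casesOn s (fun _ => mβ) (fun _ => mγ))
      (fun s => Sum.casesOn s X Y) μ) :
    iIndepFun (m := fun _ => mβ.prod mγ) (fun i ω => (X i ω, Y i ω)) μ := by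
  classical
  set piSys : ι → Set (Set Ω) := fun i =>
    Set.image2 (fun A B => X i ⁻¹' A ∩ Y i ⁻¹' B)
      {A : Set β | MeasurableSet A} {B : Set γ | MeasurableSet B} with hpiSys_def
  rw [iIndepFun_iff_iIndep]
  refine iIndepSets.iIndep (fun i => Measurable.comap_le ((hX i).prodMk (hY i))) piSys
    (fun i => ?_) (fun i => ?_) ?_
  · -- IsPiSystem
    rintro s ⟨A, hA, B, hB, rfl⟩ t ⟨A', hA', B', hB', rfl⟩ -
    refine ⟨A ∩ A', hA.inter hA', B ∩ B', hB.inter hB', ?_⟩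
    ext ω; simp; tauto
  · -- generateFrom
    rw [show (mβ.prod mγ) = MeasurableSpace.generateFrom
        (Set.image2 (· ×ˢ ·) {A : Set β | MeasurableSet A} {B : Set γ | MeasurableSet B})
      from generateFrom_prod.symm]
    rw [MeasurableSpace.comap_generateFrom]
    congr 1
    rw [Set.image_image2]
    apply Set.image2_congr
    intro A _ B _
    exact Set.mk_preimage_prod _ _
  · -- iIndepSets
    rw [iIndepSets_iff]
    intro S sets hsets
    have hex : ∀ i, ∃ (A : Set β) (B : Set γ), MeasurableSet A ∧ MeasurableSet B ∧
        (i ∈ S → sets i = X i ⁻¹' A ∩ Y i ⁻¹' B) := by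
      intro i
      by_cases hi : i ∈ S
      · obtain ⟨A, hA, B, hB, hEq⟩ := hsets i hi
        exact ⟨A, B, hA, hB, fun _ => hEq.symm⟩
      · exact ⟨Set.univ, Set.univ, MeasurableSet.univ, MeasurableSet.univ, fun h => absurd h hi⟩
    choose A B hA hB hEq using hex
    set g : ι ⊕ ι → Set Ω := Sum.elim (fun i => X i ⁻¹' A i) (fun i => Y i ⁻¹' B i) with hg_def
    have hInter : (⋂ i ∈ S, sets i) = ⋂ s ∈ S.disjSum S, g s := by
      ext ω
      simp only [Set.mem_iInter, Finset.mem_disjSum]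
      constructor
      · rintro hmem s (⟨a, ha, rfl⟩ | ⟨b, hb, rfl⟩)
        · have := hmem a ha; rw [hEq a ha] at this; exact this.1
        · have := hmem b hb; rw [hEq b hb] at this; exact this.2
      · intro hmem i hi
        rw [hEq i hi]
        exact ⟨hmem (Sum.inl i) (Or.inl ⟨i, hi, rfl⟩), hmem (Sum.inr i) (Or.inr ⟨i, hi, rfl⟩)⟩
    have hmeasI : μ (⋂ s ∈ S.disjSum S, g s) = ∏ s ∈ S.disjSum S, μ (g s) := by
      refine h.meas_biInter ?_
      rintro (i | i) -
      · exact ⟨A i, hA i, rfl⟩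
      · exact ⟨B i, hB i, rfl⟩
    have hprod : ∏ s ∈ S.disjSum S, μ (g s)
        = (∏ i ∈ S, μ (X i ⁻¹' A i)) * ∏ i ∈ S, μ (Y i ⁻¹' B i) := by
      rw [Finset.prod_disjSum]; rfl
    have hpair : ∀ i ∈ S, μ (sets i) = μ (X i ⁻¹' A i) * μ (Y i ⁻¹' B i) := by
      intro i hi
      rw [hEq i hi]
      have hIF : IndepFun (X i) (Y i) μ :=
        h.indepFun (i := Sum.inl i) (j := Sum.inr i) (by simp)
      exact hIF.measure_inter_preimage_eq_mul _ _ (hA i) (hB i)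
    rw [hInter, hmeasI, hprod, Finset.prod_congr rfl hpair, Finset.prod_mul_distrib]

lemma sgn_measurable : Measurable sgn :=
  Measurable.ite measurableSet_Ici measurable_const measurable_const

lemma abs_d_le (α x s : ℝ) (hx : |x| ≤ α) (hs : |sgn s| = 1) :
    |x - α * sgn s| ≤ 2 * α := by
  have hα : 0 ≤ α := le_trans (abs_nonneg x) hx
  calc |x - α * sgn s| ≤ |x| + |α * sgn s| := abs_sub _ _
  _ = |x| + α := by rw [abs_mul, hs, mul_one, abs_of_nonneg hα]
  _ ≤ 2 * α := by linarith

lemma abs_sgn (s : ℝ) : |sgn s| = 1 := by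
  unfold sgn; split <;> simp

lemma integral_dither (α : ℝ) (hα : 0 < α) (x : ℝ) (hx : |x| ≤ α) :
    ∫ t, |x - α * sgn (x - t)|
      ∂((ENNReal.ofReal (1 / (2 * α))) • (volume.restrict (Set.Icc (-α) α)))
    = α - x ^ 2 / α := by
  have hxa : -α ≤ x := neg_le_of_abs_le hx
  have hxb : x ≤ α := le_of_abs_le hx
  rw [integral_smul_measure]
  have hsplit : Set.Icc (-α) α = Set.Icc (-α) x ∪ Set.Ioc x α := by
    rw [Set.Icc_union_Ioc_eq_Icc hxa hxb]
  have hf_meas : Measurable (fun t : ℝ => |x - α * sgn (x - t)|) := by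
    have : Measurable (fun t : ℝ => x - t) := measurable_const.sub measurable_id
    exact ((measurable_const.sub ((sgn_measurable.comp this).const_mul α)).abs)
  -- value on the two pieces
  have hval1 : ∀ t ∈ Set.Icc (-α) x, |x - α * sgn (x - t)| = α - x := by
    intro t ht
    have : 0 ≤ x - t := by linarith [ht.2]
    rw [show sgn (x - t) = 1 from if_pos this]
    rw [mul_one, abs_sub_comm, abs_of_nonneg (by linarith)]
  have hval2 : ∀ t ∈ Set.Ioc x α, |x - α * sgn (x - t)| = α + x := by
    intro t ht
    have : ¬ (0 ≤ x - t) := by push_neg; linarith [ht.1]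
    rw [show sgn (x - t) = -1 from if_neg this]
    rw [mul_neg_one, sub_neg_eq_add, abs_of_nonneg (by linarith), add_comm]
  have hint1 : IntegrableOn (fun t : ℝ => |x - α * sgn (x - t)|) (Set.Icc (-α) x) volume := by
    refine ((integrableOn_const_iff).mpr (Or.inr ?_)).congr_fun (fun t ht => (hval1 t ht).symm)
      measurableSet_Icc
    rw [Real.volume_Icc]; exact ENNReal.ofReal_lt_top
  have hint2 : IntegrableOn (fun t : ℝ => |x - α * sgn (x - t)|) (Set.Ioc x α) volume := by
    refine ((integrableOn_const_iff).mpr (Or.inr ?_)).congr_fun (fun t ht => (hval2 t ht).symm)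
      measurableSet_Ioc
    rw [Real.volume_Ioc]; exact ENNReal.ofReal_lt_top
  have hdisj : Disjoint (Set.Icc (-α) x) (Set.Ioc x α) := by
    apply Set.disjoint_left.mpr
    rintro t ⟨-, h2⟩ ⟨h3, -⟩
    linarith
  have hunion : ∫ t in Set.Icc (-α) α, |x - α * sgn (x - t)|
      = (∫ t in Set.Icc (-α) x, |x - α * sgn (x - t)|)
      + ∫ t in Set.Ioc x α, |x - α * sgn (x - t)| := by
    rw [hsplit]
    exact setIntegral_union hdisj measurableSet_Ioc hint1 hint2
  have hI1 : ∫ t in Set.Icc (-α) x, |x - α * sgn (x - t)| = (x + α) * (α - x) := by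
    rw [setIntegral_congr_fun measurableSet_Icc hval1, setIntegral_const, Real.volume_real_Icc,
      max_eq_left (by linarith), smul_eq_mul]
    ring
  have hI2 : ∫ t in Set.Ioc x α, |x - α * sgn (x - t)| = (α - x) * (α + x) := by
    rw [setIntegral_congr_fun measurableSet_Ioc hval2, setIntegral_const, Real.volume_real_Ioc,
      max_eq_left (by linarith), smul_eq_mul]
  rw [ENNReal.toReal_ofReal (by positivity), hunion, hI1, hI2, smul_eq_mul]
  field_simp
  ring

lemma hoeffding_sum_ge {Ω : Type*} [MeasurableSpace Ω] {μ : Measure Ω} [IsProbabilityMeasure μ]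
    {m : ℕ} (hm : 0 < m) {Z : Fin m → Ω → ℝ} (hmeas : ∀ k, Measurable (Z k))
    (hindep : iIndepFun (m := fun _ => inferInstance) Z μ) {a b : ℝ}
    (hab : ∀ k ω, Z k ω ∈ Set.Icc a b) (hmean : ∀ k, ∫ ω, Z k ω ∂μ = 0)
    (hba : 0 < b - a) {ε : ℝ} (hε : 0 < ε) :
    (μ {ω | (m : ℝ) * ε ≤ ∑ k, Z k ω}).toReal
      ≤ Real.exp (-(2 * m * ε ^ 2) / (b - a) ^ 2) := by
  set t : ℝ := 4 * ε / (b - a) ^ 2 with ht_def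
  have ht : 0 < t := by positivity
  have hZbd : ∀ k ω, |Z k ω| ≤ max |a| |b| := by
    intro k ω
    rcases hab k ω with ⟨h1, h2⟩
    rw [abs_le]
    exact ⟨le_trans (neg_le_neg (le_max_left |a| |b|)) (le_trans (neg_abs_le a) h1),
      le_trans h2 (le_trans (le_abs_self b) (le_max_right |a| |b|))⟩
  have hint : ∀ (s : Finset (Fin m)), Integrable (fun ω => Real.exp (t * (∑ k ∈ s, Z k) ω)) μ := by
    intro s
    refine bounded_integrable (by fun_prop) (Real.exp (|t| * (m * max |a| |b|))) (fun ω => ?_)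
    rw [abs_of_nonneg (Real.exp_pos _).le]
    apply Real.exp_le_exp.mpr
    calc t * (∑ k ∈ s, Z k) ω ≤ |t * (∑ k ∈ s, Z k) ω| := le_abs_self _
    _ = |t| * |∑ k ∈ s, Z k ω| := by rw [abs_mul, Finset.sum_apply]
    _ ≤ |t| * (m * max |a| |b|) := by
        apply mul_le_mul_of_nonneg_left _ (abs_nonneg t)
        calc |∑ k ∈ s, Z k ω| ≤ ∑ k ∈ s, |Z k ω| := Finset.abs_sum_le_sum_abs _ _
        _ ≤ ∑ k ∈ s, max |a| |b| := Finset.sum_le_sum (fun k _ => hZbd k ω)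
        _ ≤ m * max |a| |b| := by
            rw [Finset.sum_const, nsmul_eq_mul]
            have h0 : (0:ℝ) ≤ max |a| |b| := le_trans (abs_nonneg a) (le_max_left _ _)
            have : (s.card : ℝ) ≤ m := by
              exact_mod_cast Finset.card_le_card (Finset.subset_univ s) |>.trans_eq
                (by simp)
            nlinarith
  have hchern := measure_ge_le_exp_mul_mgf (X := ∑ k, Z k) (μ := μ) ((m : ℝ) * ε) ht.le
    (by simpa using hint Finset.univ)
  have hmgfsum : mgf (∑ k, Z k) μ t = ∏ k, mgf (Z k) μ t :=
    hindep.mgf_sum hmeas Finset.univ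
  have hmgfle : ∀ k, mgf (Z k) μ t ≤ Real.exp (t ^ 2 * (b - a) ^ 2 / 8) := fun k =>
    hoeffding_lemma (hmeas k) (hab k) (hmean k) t
  have hprodle : ∏ k : Fin m, mgf (Z k) μ t ≤ Real.exp (m * (t ^ 2 * (b - a) ^ 2 / 8)) := by
    calc ∏ k : Fin m, mgf (Z k) μ t ≤ ∏ _k : Fin m, Real.exp (t ^ 2 * (b - a) ^ 2 / 8) :=
          Finset.prod_le_prod (fun k _ => mgf_nonneg) (fun k _ => hmgfle k)
    _ = Real.exp (m * (t ^ 2 * (b - a) ^ 2 / 8)) := by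
        rw [Finset.prod_const, ← Real.exp_nat_mul]
        simp
  have hset : {ω | (m : ℝ) * ε ≤ (∑ k, Z k) ω} = {ω | (m : ℝ) * ε ≤ ∑ k, Z k ω} := by
    ext ω; simp [Finset.sum_apply]
  calc (μ {ω | (m : ℝ) * ε ≤ ∑ k, Z k ω}).toReal
      = (μ {ω | (m : ℝ) * ε ≤ (∑ k, Z k) ω}).toReal := by rw [hset]
  _ ≤ Real.exp (-t * ((m : ℝ) * ε)) * mgf (∑ k, Z k) μ t := hchern
  _ ≤ Real.exp (-t * ((m : ℝ) * ε)) * Real.exp (m * (t ^ 2 * (b - a) ^ 2 / 8)) := by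
      apply mul_le_mul_of_nonneg_left _ (Real.exp_pos _).le
      rw [hmgfsum]; exact hprodle
  _ = Real.exp (-t * ((m : ℝ) * ε) + m * (t ^ 2 * (b - a) ^ 2 / 8)) := (Real.exp_add _ _).symm
  _ = Real.exp (-(2 * m * ε ^ 2) / (b - a) ^ 2) := by
      congr 1
      rw [ht_def]
      field_simp
      ring


lemma mean_dk {Ω : Type*} [MeasurableSpace Ω] {μ : Measure Ω} [IsProbabilityMeasure μ]
    (n₁ n₂ : ℕ) (hn₁ : 0 < n₁) (hn₂ : 0 < n₂) (α : ℝ) (hα : 0 < α)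
    (X : Matrix (Fin n₁) (Fin n₂) ℝ) (hX : ∀ i j, |X i j| ≤ α)
    (I : Ω → Fin n₁ × Fin n₂) (T : Ω → ℝ)
    (hImeas : Measurable I) (hTmeas : Measurable T)
    (hIunif : ∀ p, μ (I ⁻¹' {p}) = ((n₁ * n₂ : ENNReal))⁻¹)
    (hTunif : Measure.map T μ
      = ENNReal.ofReal (1 / (2 * α)) • (volume.restrict (Set.Icc (-α) α)))
    (hIT : IndepFun I T μ) :
    ∫ ω, |X (I ω).1 (I ω).2 - α * sgn (X (I ω).1 (I ω).2 - T ω)| ∂μ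
      = α - (∑ i, ∑ j, (X i j) ^ 2) / (α * n₁ * n₂) := by
  set G : (Fin n₁ × Fin n₂) × ℝ → ℝ :=
    fun q => |X q.1.1 q.1.2 - α * sgn (X q.1.1 q.1.2 - q.2)| with hG_def
  have hxmeas : Measurable (fun q : (Fin n₁ × Fin n₂) × ℝ => X q.1.1 q.1.2) :=
    (measurable_of_countable (fun p : Fin n₁ × Fin n₂ => X p.1 p.2)).comp measurable_fst
  have hGmeas : Measurable G :=
    (hxmeas.sub ((sgn_measurable.comp (hxmeas.sub measurable_snd)).const_mul α)).abs
  have hGbd : ∀ q, |G q| ≤ 2 * α := by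
    intro q
    rw [hG_def, abs_abs]
    exact abs_d_le α _ _ (hX _ _) (abs_sgn _)
  -- the τ-marginal is a probability measure
  have hTprob : IsProbabilityMeasure
      (ENNReal.ofReal (1 / (2 * α)) • (volume.restrict (Set.Icc (-α) α)) : Measure ℝ) := by
    constructor
    rw [Measure.smul_apply, Measure.restrict_apply MeasurableSet.univ, Set.univ_inter,
      Real.volume_Icc, smul_eq_mul, ← ENNReal.ofReal_mul (by positivity)]
    rw [show 1 / (2 * α) * (α - -α) = 1 by field_simp; ring]
    simp
  have hIprob : IsProbabilityMeasure (Measure.map I μ) :=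
    Measure.isProbabilityMeasure_map hImeas.aemeasurable
  -- joint law is the product of marginals
  have hjoint : Measure.map (fun ω => (I ω, T ω)) μ
      = (Measure.map I μ).prod (Measure.map T μ) :=
    (indepFun_iff_map_prod_eq_prod_map_map hImeas.aemeasurable hTmeas.aemeasurable).mp hIT
  have hstep1 : ∫ ω, |X (I ω).1 (I ω).2 - α * sgn (X (I ω).1 (I ω).2 - T ω)| ∂μ
      = ∫ q, G q ∂(Measure.map (fun ω => (I ω, T ω)) μ) := by
    rw [integral_map (hImeas.prodMk hTmeas).aemeasurable hGmeas.aestronglyMeasurable]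
  rw [hstep1, hjoint, hTunif]
  have hGint : Integrable G ((Measure.map I μ).prod
      (ENNReal.ofReal (1 / (2 * α)) • (volume.restrict (Set.Icc (-α) α)))) :=
    bounded_integrable hGmeas (2 * α) hGbd
  rw [MeasureTheory.integral_prod G hGint]
  have hinner : ∀ p : Fin n₁ × Fin n₂,
      (∫ t, G (p, t) ∂(ENNReal.ofReal (1 / (2 * α)) • (volume.restrict (Set.Icc (-α) α))))
      = α - (X p.1 p.2) ^ 2 / α := fun p => integral_dither α hα (X p.1 p.2) (hX p.1 p.2)
  rw [show (fun p : Fin n₁ × Fin n₂ =>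
      ∫ t, G (p, t) ∂(ENNReal.ofReal (1 / (2 * α)) • (volume.restrict (Set.Icc (-α) α))))
      = fun p => α - (X p.1 p.2) ^ 2 / α from funext hinner]
  have hx2 : ∀ p : Fin n₁ × Fin n₂, (X p.1 p.2) ^ 2 ≤ ∑ i, ∑ j, (X i j) ^ 2 := by
    intro p
    have h1 : (X p.1 p.2) ^ 2 ≤ ∑ j, (X p.1 j) ^ 2 :=
      Finset.single_le_sum (f := fun j => (X p.1 j) ^ 2) (fun j _ => sq_nonneg _) (Finset.mem_univ p.2)
    exact h1.trans (Finset.single_le_sum (f := fun i => ∑ j, (X i j) ^ 2)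
      (fun i _ => Finset.sum_nonneg fun j _ => sq_nonneg _) (Finset.mem_univ p.1))
  have hbint : Integrable (fun p : Fin n₁ × Fin n₂ => α - (X p.1 p.2) ^ 2 / α)
      (Measure.map I μ) := by
    refine bounded_integrable (measurable_of_countable _)
      (α + (∑ i, ∑ j, (X i j) ^ 2) / α) (fun p => ?_)
    calc |α - X p.1 p.2 ^ 2 / α| ≤ |α| + |X p.1 p.2 ^ 2 / α| := abs_sub _ _
    _ = α + X p.1 p.2 ^ 2 / α := by
        rw [abs_of_pos hα, abs_of_nonneg (by positivity)]
    _ ≤ α + (∑ i, ∑ j, (X i j) ^ 2) / α := by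
        have := hx2 p
        gcongr
  rw [integral_fintype hbint]
  have hmap : ∀ p : Fin n₁ × Fin n₂, Measure.map I μ {p} = ((n₁ * n₂ : ENNReal))⁻¹ := by
    intro p
    rw [Measure.map_apply hImeas (measurableSet_singleton p)]
    exact hIunif p
  have htoReal : ∀ p : Fin n₁ × Fin n₂,
      (Measure.map I μ {p}).toReal = ((n₁ : ℝ) * n₂)⁻¹ := by
    intro p
    rw [hmap p]
    simp [ENNReal.toReal_inv]
  simp_rw [measureReal_def, htoReal, smul_eq_mul]
  rw [← Finset.mul_sum, Finset.sum_sub_distrib, Finset.sum_const, Finset.card_univ]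
  simp only [Fintype.card_prod, Fintype.card_fin, nsmul_eq_mul]
  rw [← Finset.sum_div, Fintype.sum_prod_type]
  have hn₁' : (n₁ : ℝ) ≠ 0 := Nat.cast_ne_zero.mpr hn₁.ne'
  have hn₂' : (n₂ : ℝ) ≠ 0 := Nat.cast_ne_zero.mpr hn₂.ne'
  field_simp
  push_cast
  ring

end Aux

/-- Pointwise (fixed-matrix) concentration bound (equation (30) in the paper):
for a fixed matrix `X` with entries bounded by `α`, the averaged dithered one-bit
distortion concentrates around `α - ‖X‖_F²/(α n₁ n₂)`. -/
theorem pointwise_concentration (n₁ n₂ m' : ℕ) (hn₁ : 0 < n₁) (hn₂ : 0 < n₂)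
    (hm' : 0 < m') (α ε : ℝ) (hα : 0 < α) (hε : 0 < ε)
    (X : Matrix (Fin n₁) (Fin n₂) ℝ) (hX : ∀ i j, |X i j| ≤ α)
    {Ω : Type*} [MeasureSpace Ω] [IsProbabilityMeasure (ℙ : Measure Ω)]
    (idx : Fin m' → Ω → Fin n₁ × Fin n₂) (τ : Fin m' → Ω → ℝ)
    (hidxmeas : ∀ k, Measurable (idx k)) (hτmeas : ∀ k, Measurable (τ k))
    -- each index pair is uniform on {1,…,n₁}×{1,…,n₂}
    (hidxunif : ∀ k p, ℙ (idx k ⁻¹' {p}) = ((n₁ * n₂ : ENNReal))⁻¹)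
    -- each dither is uniform on [-α, α]
    (hτunif : ∀ k, Measure.map (τ k) ℙ =
      ENNReal.ofReal (1 / (2 * α)) • (volume.restrict (Set.Icc (-α) α)))
    -- all 2m' random variables are mutually independent
    (hindep : iIndepFun
      (β := fun s : Fin m' ⊕ Fin m' => Sum.elim (fun _ => Fin n₁ × Fin n₂) (fun _ => ℝ) s)
      (m := fun s => Sum.casesOn s (fun _ => (inferInstance : MeasurableSpace (Fin n₁ × Fin n₂)))
        (fun _ => (inferInstance : MeasurableSpace ℝ)))
      (fun s => Sum.casesOn s idx τ) ℙ) :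
    ℙ {ω | ε ≤ |(1 / (m' : ℝ)) * (∑ k : Fin m',
        |X (idx k ω).1 (idx k ω).2 - α * sgn (X (idx k ω).1 (idx k ω).2 - τ k ω)|)
        - α + frobR X ^ 2 / (α * n₁ * n₂)|}
      ≤ ENNReal.ofReal (2 * Real.exp (-(ε ^ 2 * m') / (2 * α ^ 2))) := by
  classical
  set mubar : ℝ := α - (∑ i, ∑ j, (X i j) ^ 2) / (α * n₁ * n₂) with hmubar_def
  set G : (Fin n₁ × Fin n₂) × ℝ → ℝ :=
    fun q => |X q.1.1 q.1.2 - α * sgn (X q.1.1 q.1.2 - q.2)| with hG_def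
  have hxmeas : Measurable (fun q : (Fin n₁ × Fin n₂) × ℝ => X q.1.1 q.1.2) :=
    (measurable_of_countable (fun p : Fin n₁ × Fin n₂ => X p.1 p.2)).comp measurable_fst
  have hGmeas : Measurable G :=
    (hxmeas.sub ((sgn_measurable.comp (hxmeas.sub measurable_snd)).const_mul α)).abs
  set W : Fin m' → Ω → (Fin n₁ × Fin n₂) × ℝ := fun k ω => (idx k ω, τ k ω) with hW_def
  set Z : Fin m' → Ω → ℝ := fun k => (fun q => G q - mubar) ∘ W k with hZ_def
  have hZmeas : ∀ k, Measurable (Z k) :=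
    fun k => (hGmeas.sub measurable_const).comp ((hidxmeas k).prodMk (hτmeas k))
  -- independence of the Z's
  have hWindep : iIndepFun (m := fun _ => Prod.instMeasurableSpace) W ℙ :=
    iIndepFun_pair hidxmeas hτmeas hindep
  have hZindep : iIndepFun (m := fun _ => inferInstance) Z ℙ :=
    hWindep.comp (fun _ => fun q => G q - mubar) (fun _ => hGmeas.sub measurable_const)
  have hZ'indep : iIndepFun (m := fun _ => inferInstance) (fun k => -(Z k)) ℙ :=
    hZindep.comp (fun _ => Neg.neg) (fun _ => measurable_neg)
  -- bounds on d and Z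
  have hd_bd : ∀ k ω, G (W k ω) ∈ Set.Icc (0 : ℝ) (2 * α) := by
    intro k ω
    constructor
    · exact abs_nonneg _
    · exact abs_d_le α _ _ (hX _ _) (abs_sgn _)
  have hZ_bd : ∀ k ω, Z k ω ∈ Set.Icc (-mubar) (2 * α - mubar) := by
    intro k ω
    rcases hd_bd k ω with ⟨h1, h2⟩
    exact ⟨by simp [hZ_def]; linarith, by simp [hZ_def]; linarith⟩
  have hZ'_bd : ∀ k ω, (-(Z k)) ω ∈ Set.Icc (mubar - 2 * α) mubar := by
    intro k ω
    rcases hZ_bd k ω with ⟨h1, h2⟩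
    simp only [Pi.neg_apply, Set.mem_Icc]
    constructor <;> linarith
  -- means
  have hd_mean : ∀ k, ∫ ω, G (W k ω) ∂ℙ = mubar := by
    intro k
    have hIT : IndepFun (idx k) (τ k) ℙ :=
      hindep.indepFun (i := Sum.inl k) (j := Sum.inr k) (by simp)
    exact mean_dk n₁ n₂ hn₁ hn₂ α hα X hX (idx k) (τ k) (hidxmeas k) (hτmeas k)
      (hidxunif k) (hτunif k) hIT
  have hd_int : ∀ k, Integrable (fun ω => G (W k ω)) ℙ := by
    intro k
    refine bounded_integrable (hGmeas.comp ((hidxmeas k).prodMk (hτmeas k))) (2 * α)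
      (fun ω => ?_)
    rcases hd_bd k ω with ⟨h1, h2⟩
    rw [abs_of_nonneg h1]
    exact h2
  have hZ_mean : ∀ k, ∫ ω, Z k ω ∂ℙ = 0 := by
    intro k
    have : Z k = fun ω => G (W k ω) - mubar := rfl
    rw [this, integral_sub (hd_int k) (integrable_const _), hd_mean k, integral_const]
    simp
  have hZ'_mean : ∀ k, ∫ ω, (-(Z k)) ω ∂ℙ = 0 := by
    intro k
    simp only [Pi.neg_apply, integral_neg, hZ_mean k, neg_zero]
  -- Chernoff bounds for both tails
  have hba : (0:ℝ) < (2 * α - mubar) - (-mubar) := by linarith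
  have hba' : (0:ℝ) < mubar - (mubar - 2 * α) := by linarith
  have hA := hoeffding_sum_ge hm' hZmeas hZindep hZ_bd hZ_mean hba hε
  have hB := hoeffding_sum_ge hm' (fun k => (hZmeas k).neg) hZ'indep hZ'_bd hZ'_mean hba' hε
  have hexpeq : -(2 * (m' : ℝ) * ε ^ 2) / ((2 * α - mubar) - (-mubar)) ^ 2
      = -(ε ^ 2 * m') / (2 * α ^ 2) := by
    rw [show (2 * α - mubar) - (-mubar) = 2 * α by ring]
    field_simp
  have hexpeq' : -(2 * (m' : ℝ) * ε ^ 2) / (mubar - (mubar - 2 * α)) ^ 2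
      = -(ε ^ 2 * m') / (2 * α ^ 2) := by
    rw [show mubar - (mubar - 2 * α) = 2 * α by ring]
    field_simp
  rw [hexpeq] at hA
  rw [hexpeq'] at hB
  -- event inclusion
  have hfrob : frobR X ^ 2 = ∑ i, ∑ j, (X i j) ^ 2 := by
    rw [frobR, Real.sq_sqrt]
    exact Finset.sum_nonneg fun i _ => Finset.sum_nonneg fun j _ => sq_nonneg _
  have hm'pos : (0:ℝ) < m' := Nat.cast_pos.mpr hm'
  have hsub : {ω | ε ≤ |(1 / (m' : ℝ)) * (∑ k : Fin m',
        |X (idx k ω).1 (idx k ω).2 - α * sgn (X (idx k ω).1 (idx k ω).2 - τ k ω)|)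
        - α + frobR X ^ 2 / (α * n₁ * n₂)|}
      ⊆ {ω | (m' : ℝ) * ε ≤ ∑ k, Z k ω} ∪ {ω | (m' : ℝ) * ε ≤ ∑ k, (-(Z k)) ω} := by
    intro ω hω
    simp only [Set.mem_setOf_eq] at hω
    have hsumZ : ∑ k, Z k ω = (∑ k : Fin m',
        |X (idx k ω).1 (idx k ω).2 - α * sgn (X (idx k ω).1 (idx k ω).2 - τ k ω)|)
        - (m' : ℝ) * mubar := by
      have : ∀ k : Fin m', Z k ω =
          |X (idx k ω).1 (idx k ω).2 - α * sgn (X (idx k ω).1 (idx k ω).2 - τ k ω)| - mubar :=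
        fun k => rfl
      rw [Finset.sum_congr rfl (fun k _ => this k), Finset.sum_sub_distrib, Finset.sum_const,
        Finset.card_univ, Fintype.card_fin, nsmul_eq_mul]
    have heq : (1 / (m' : ℝ)) * (∑ k : Fin m',
        |X (idx k ω).1 (idx k ω).2 - α * sgn (X (idx k ω).1 (idx k ω).2 - τ k ω)|)
        - α + frobR X ^ 2 / (α * n₁ * n₂)
        = (1 / (m' : ℝ)) * ∑ k, Z k ω := by
      rw [hsumZ, hfrob, hmubar_def]
      field_simp
      ring
    rw [heq, abs_mul, abs_of_pos (by positivity : (0:ℝ) < 1 / (m' : ℝ))] at hω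
    have habs : (m' : ℝ) * ε ≤ |∑ k, Z k ω| := by
      rw [← mul_le_mul_iff_right₀ (by positivity : (0:ℝ) < 1 / (m' : ℝ))]
      calc (1 / (m' : ℝ)) * ((m' : ℝ) * ε) = ε := by field_simp
      _ ≤ 1 / (m' : ℝ) * |∑ k, Z k ω| := hω
    rcases le_abs.mp habs with h | h
    · exact Or.inl h
    · refine Or.inr ?_
      have hneg : ∑ k, (-(Z k)) ω = -∑ k, Z k ω := by
        simp only [Pi.neg_apply]
        exact Finset.sum_neg_distrib _
      show (m' : ℝ) * ε ≤ ∑ k, (-(Z k)) ω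
      rw [hneg]
      linarith
  -- put it together
  have hexp_pos : (0:ℝ) ≤ Real.exp (-(ε ^ 2 * m') / (2 * α ^ 2)) := (Real.exp_pos _).le
  have hAbd : ℙ {ω | (m' : ℝ) * ε ≤ ∑ k, Z k ω}
      ≤ ENNReal.ofReal (Real.exp (-(ε ^ 2 * m') / (2 * α ^ 2))) :=
    (ENNReal.le_ofReal_iff_toReal_le (measure_ne_top _ _) hexp_pos).mpr hA
  have hBbd : ℙ {ω | (m' : ℝ) * ε ≤ ∑ k, (-(Z k)) ω}
      ≤ ENNReal.ofReal (Real.exp (-(ε ^ 2 * m') / (2 * α ^ 2))) :=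
    (ENNReal.le_ofReal_iff_toReal_le (measure_ne_top _ _) hexp_pos).mpr hB
  calc ℙ {ω | ε ≤ |(1 / (m' : ℝ)) * (∑ k : Fin m',
        |X (idx k ω).1 (idx k ω).2 - α * sgn (X (idx k ω).1 (idx k ω).2 - τ k ω)|)
        - α + frobR X ^ 2 / (α * n₁ * n₂)|}
      ≤ ℙ ({ω | (m' : ℝ) * ε ≤ ∑ k, Z k ω} ∪ {ω | (m' : ℝ) * ε ≤ ∑ k, (-(Z k)) ω}) :=
        measure_mono hsub
  _ ≤ ℙ {ω | (m' : ℝ) * ε ≤ ∑ k, Z k ω} + ℙ {ω | (m' : ℝ) * ε ≤ ∑ k, (-(Z k)) ω} :=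
        measure_union_le _ _
  _ ≤ ENNReal.ofReal (Real.exp (-(ε ^ 2 * m') / (2 * α ^ 2)))
      + ENNReal.ofReal (Real.exp (-(ε ^ 2 * m') / (2 * α ^ 2))) := add_le_add hAbd hBbd
  _ = ENNReal.ofReal (2 * Real.exp (-(ε ^ 2 * m') / (2 * α ^ 2))) := by
      rw [← ENNReal.ofReal_add hexp_pos hexp_pos]
      congr 1
      ring
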